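/- Exactness of the Helmholtz-Robin boundary stencil on quadratic polynomials: Let h > 0, K, σ ∈ ℝ with λ = 12 − Kh² ≠ 0. Let u be any polynomial of total degree at most 2, f = Δu + Ku, and g(y) = −u_x(0,y) + σ u(0,y). Then Σ α_{i_k,j_k} u(i_k h, y + j_k h) = Σ β_{i_k,j_k} f(i_k h, y + j_k h) + γ₀ g(y), where the α, β, γ coefficients are those of equations (2.17)–(2.18) of the scheme: α = (1/(λh²))[[8,4],[4σKh³+λKh²−24σh−40, 16],[8,4]], β = (1/λ)[[0,1,0],[−1, 8−Kh², 3],[0,1,0]], γ₀ = (4Kh²−24)/(λh). -/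

import Mathlib

noncomputable def pdx (u : ℝ → ℝ → ℝ) : ℝ → ℝ → ℝ := fun x y => deriv (fun s => u s y) x
noncomputable def pdy (u : ℝ → ℝ → ℝ) : ℝ → ℝ → ℝ := fun x y => deriv (fun t => u x t) y

private lemma quad_deriv (A B C x : ℝ) :
    deriv (fun s : ℝ => A + B * s + C * s ^ 2) x = B + 2 * C * x := by
  have H : HasDerivAt (fun s : ℝ => A + B * s + C * s ^ 2) (B + 2 * C * x) x := by
    have h1 : HasDerivAt (fun s : ℝ => A + B * s) B x := by
      simpa using ((hasDerivAt_id x).const_mul B).const_add A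
    have h2 : HasDerivAt (fun s : ℝ => C * s ^ 2) (C * (2 * x)) x := by
      simpa using (hasDerivAt_pow 2 x).const_mul C
    have := h1.add h2
    exact this.congr_deriv (by ring)
  exact H.deriv

/-- Exactness of the Helmholtz–Robin boundary stencil on polynomials of total degree ≤ 2,
with `f = Δu + K u` and `g(y) = −u_x(0,y) + σ u(0,y)`. -/
theorem helmholtz_robin_boundary_stencil_exact_on_quadratics
    (u : ℝ → ℝ → ℝ) (c : ℕ → ℕ → ℝ)
    (hu : ∀ x y : ℝ, u x y =
      ∑ k₁ ∈ Finset.range 3, ∑ k₂ ∈ Finset.range 3,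
        if k₁ + k₂ ≤ 2 then c k₁ k₂ * x ^ k₁ * y ^ k₂ else 0)
    (K σ h lam : ℝ) (hh : 0 < h) (hlam : lam = 12 - K * h ^ 2) (hne : lam ≠ 0)
    (f : ℝ → ℝ → ℝ)
    (hf : ∀ x y : ℝ, f x y = pdx (pdx u) x y + pdy (pdy u) x y + K * u x y)
    (g : ℝ → ℝ) (hg : ∀ y : ℝ, g y = -pdx u 0 y + σ * u 0 y)
    (y : ℝ) :
    (1 / (lam * h ^ 2)) *
        (8 * u 0 (y - h) + 4 * u h (y - h)
          + (4 * σ * K * h ^ 3 + lam * K * h ^ 2 - 24 * σ * h - 40) * u 0 y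
          + 16 * u h y + 8 * u 0 (y + h) + 4 * u h (y + h))
      = (1 / lam) *
          (f 0 (y - h) + f 0 (y + h) - f (-h) y + (8 - K * h ^ 2) * f 0 y + 3 * f h y)
        + ((4 * K * h ^ 2 - 24) / (lam * h)) * g y := by
  have hu' : ∀ x y : ℝ, u x y =
      (c 0 0 + c 0 1 * y + c 0 2 * y ^ 2) + (c 1 0 + c 1 1 * y) * x + c 2 0 * x ^ 2 := by
    intro x y
    rw [hu]
    simp [Finset.sum_range_succ]
    ring
  have hpdx : ∀ x y : ℝ, pdx u x y = (c 1 0 + c 1 1 * y) + 2 * c 2 0 * x := by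
    intro x y
    have : (fun s => u s y) = fun s : ℝ =>
        (c 0 0 + c 0 1 * y + c 0 2 * y ^ 2) + (c 1 0 + c 1 1 * y) * s + c 2 0 * s ^ 2 := by
      funext s; exact hu' s y
    rw [pdx, this, quad_deriv]
  have hpdy : ∀ x y : ℝ, pdy u x y = (c 0 1 + c 1 1 * x) + 2 * c 0 2 * y := by
    intro x y
    have : (fun t => u x t) = fun t : ℝ =>
        (c 0 0 + c 1 0 * x + c 2 0 * x ^ 2) + (c 0 1 + c 1 1 * x) * t + c 0 2 * t ^ 2 := by
      funext t; rw [hu' x t]; ring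
    rw [pdy, this, quad_deriv]
  have hpdxx : ∀ x y : ℝ, pdx (pdx u) x y = 2 * c 2 0 := by
    intro x y
    have : (fun s => pdx u s y) = fun s : ℝ =>
        (c 1 0 + c 1 1 * y) + (2 * c 2 0) * s + 0 * s ^ 2 := by
      funext s; rw [hpdx s y]; ring
    rw [pdx, this, quad_deriv]; ring
  have hpdyy : ∀ x y : ℝ, pdy (pdy u) x y = 2 * c 0 2 := by
    intro x y
    have : (fun t => pdy u x t) = fun t : ℝ =>
        (c 0 1 + c 1 1 * x) + (2 * c 0 2) * t + 0 * t ^ 2 := by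
      funext t; rw [hpdy x t]; ring
    rw [pdy, this, quad_deriv]; ring
  have hne' : h ≠ 0 := ne_of_gt hh
  simp only [hg, hf, hpdxx, hpdyy, hpdx, hu']
  field_simp
  rw [hlam]
  ring
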